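/- Let X be a real normed vector space, M a real vector space, and b : X → M → ℝ a bilinear map. Let X_h ⊆ X and M_h ⊆ M be linear subspaces, let c_F ≥ 0, and let Π : X → X be a linear map such that: (i) Π x ∈ X_h for all x ∈ X; (ii) Π w = w for all w ∈ X_h; (iii) ‖Π x‖ ≤ c_F ‖x‖ for all x ∈ X; and (iv) b (x − Π x) μ = 0 for all x ∈ X and all μ ∈ M_h. Let u ∈ X satisfy b u μ = 0 for all μ ∈ M_h, and set Z_h = {w ∈ X_h : b w μ = 0 for all μ ∈ M_h}. Then Π u ∈ Z_h and for every w ∈ X_h one has ‖u − Π u‖ ≤ (1 + c_F) ‖u − w‖; consequently the distance from u to Z_h is at most (1 + c_F) times the distance from u to X_h. -/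
import Mathlib


/-- The Fortin-operator approximation argument behind Lemma 7.6: if `Pf` is a
bounded linear projection onto `X_h` (stable with constant `c_F`) preserving
the constraint `b · μ = 0` for `μ ∈ M_h`, and `u` satisfies the constraint,
then `Pf u` lies in the discretely constrained space `Z_h` and
`‖u - Pf u‖ ≤ (1 + c_F) ‖u - w‖` for all `w ∈ X_h`; consequently
`dist(u, Z_h) ≤ (1 + c_F) dist(u, X_h)`. -/
theorem fortin_operator_approximation
    {X M : Type*} [NormedAddCommGroup X] [NormedSpace ℝ X] [AddCommGroup M] [Module ℝ M]
    (b : X →ₗ[ℝ] M →ₗ[ℝ] ℝ)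
    (Xh : Submodule ℝ X) (Mh : Submodule ℝ M)
    (cF : ℝ) (hcF : 0 ≤ cF)
    (Pf : X →ₗ[ℝ] X)
    (hmem : ∀ x : X, Pf x ∈ Xh)
    (hproj : ∀ w ∈ Xh, Pf w = w)
    (hstab : ∀ x : X, ‖Pf x‖ ≤ cF * ‖x‖)
    (hpres : ∀ x : X, ∀ μ ∈ Mh, b (x - Pf x) μ = 0)
    (u : X) (hu : ∀ μ ∈ Mh, b u μ = 0) :
    Pf u ∈ {w : X | w ∈ Xh ∧ ∀ μ ∈ Mh, b w μ = 0} ∧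
      (∀ w ∈ Xh, ‖u - Pf u‖ ≤ (1 + cF) * ‖u - w‖) ∧
      Metric.infDist u {w : X | w ∈ Xh ∧ ∀ μ ∈ Mh, b w μ = 0} ≤
        (1 + cF) * Metric.infDist u (Xh : Set X) := by
  have hZ : Pf u ∈ {w : X | w ∈ Xh ∧ ∀ μ ∈ Mh, b w μ = 0} := by
    refine ⟨hmem u, fun μ hμ => ?_⟩
    have h1 := hpres u μ hμ
    have : b (u - Pf u) μ = b u μ - b (Pf u) μ := by simp [map_sub]
    rw [this, hu μ hμ] at h1
    linarith
  have hbound : ∀ w ∈ Xh, ‖u - Pf u‖ ≤ (1 + cF) * ‖u - w‖ := by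
    intro w hw
    have key : u - Pf u = (u - w) - Pf (u - w) := by
      rw [map_sub, hproj w hw]; abel
    calc ‖u - Pf u‖ = ‖(u - w) - Pf (u - w)‖ := by rw [key]
      _ ≤ ‖u - w‖ + ‖Pf (u - w)‖ := norm_sub_le _ _
      _ ≤ ‖u - w‖ + cF * ‖u - w‖ := by linarith [hstab (u - w)]
      _ = (1 + cF) * ‖u - w‖ := by ring
  refine ⟨hZ, hbound, ?_⟩
  have hpos : (0 : ℝ) < 1 + cF := by linarith
  have h1 : ∀ w ∈ (Xh : Set X), Metric.infDist u {w : X | w ∈ Xh ∧ ∀ μ ∈ Mh, b w μ = 0} ≤ (1 + cF) * dist u w := by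
    intro w hw
    calc Metric.infDist u {w : X | w ∈ Xh ∧ ∀ μ ∈ Mh, b w μ = 0}
        ≤ dist u (Pf u) := Metric.infDist_le_dist_of_mem hZ
      _ = ‖u - Pf u‖ := by rw [dist_eq_norm]
      _ ≤ (1 + cF) * ‖u - w‖ := hbound w hw
      _ = (1 + cF) * dist u w := by rw [dist_eq_norm]
  have hne : (Xh : Set X).Nonempty := ⟨0, Xh.zero_mem⟩
  rw [← div_le_iff₀' hpos]
  refine le_of_not_gt fun hlt => ?_
  obtain ⟨w, hw, hwlt⟩ := (Metric.infDist_lt_iff hne).1 hlt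
  have := h1 w hw
  rw [lt_div_iff₀' hpos] at hwlt
  linarith
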